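/- The subordinated symmetric Laguerre semigroup has polynomial eigenvalue decay: for β > 0 and t > 0, the operator P̃^{τ^{(β)}}_t f = Σ_{n≥0} c_n^t(β) c_n(β) ⟨f, L_n^{(β)}⟩_{ν_β} L_n^{(β)}, with c_n(β) = Γ(n+1)Γ(β+1)/Γ(n+β+1), is a self-adjoint contraction on L²(ν_β), and for all f ∈ L²(ν_β), Var_{ν_β}(P̃^{τ^{(β)}}_t[f]) ≤ (1+β)^{−2t} Var_{ν_β}(f). -/

import Mathlib

open MeasureTheory
open scoped RealInnerProductSpace

/-- The probability measure `ν_β(dx) = x^β e^{-x}/Γ(β+1) dx` on `(0,∞)`. -/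
noncomputable def lagMeasure (β : ℝ) : Measure ℝ :=
  (volume.restrict (Set.Ioi (0 : ℝ))).withDensity fun x =>
    ENNReal.ofReal (x ^ β * Real.exp (-x) / Real.Gamma (β + 1))

/-- The Laguerre polynomial `L_n^{(β)}(x) = ∑_{r=0}^n (-1)^r binom(n+β, n-r) x^r/r!`. -/
noncomputable def laguerrePoly (β : ℝ) (n : ℕ) (x : ℝ) : ℝ :=
  ∑ r ∈ Finset.range (n + 1), (-1 : ℝ) ^ r *
    (Real.Gamma (n + β + 1) / (Real.Gamma (r + β + 1) * (Nat.factorial (n - r)))) *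
    x ^ r / Nat.factorial r

/-- `c_n(β) = Γ(n+1)Γ(β+1)/Γ(n+β+1)`. -/
noncomputable def lagC (β : ℝ) (n : ℕ) : ℝ :=
  Real.Gamma (n + 1) * Real.Gamma (β + 1) / Real.Gamma (n + β + 1)

/-- The variance `Var_ν(f) = ∫ f² dν - (∫ f dν)²` of `f` under `ν_β`. -/
noncomputable def lagVar (β : ℝ) (f : ℝ → ℝ) : ℝ :=
  (∫ x, (f x) ^ 2 ∂(lagMeasure β)) - (∫ x, f x ∂(lagMeasure β)) ^ 2

section Aux

variable {E : Type*} [NormedAddCommGroup E] [InnerProductSpace ℝ E]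

lemma aux_summable [CompleteSpace E] {e : ℕ → E} (hON : Orthonormal ℝ e) {b : ℕ → ℝ}
    (hb : Summable fun n => b n ^ 2) : Summable fun n => b n • e n := by
  have h := (hON.orthogonalFamily.summable_iff_norm_sq_summable b).mpr
    (by simpa [Real.norm_eq_abs, sq_abs] using hb)
  simpa [LinearIsometry.toSpanSingleton_apply] using h

lemma aux_inner_tsum {e : ℕ → E} {b : ℕ → ℝ}
    (hS : Summable fun n => b n • e n) (g : E) :
    ⟪∑' n, b n • e n, g⟫ = ∑' n, b n * ⟪e n, g⟫ := by
  rw [real_inner_comm]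
  rw [show ⟪g, ∑' n, b n • e n⟫ = (innerSL ℝ g) (∑' n, b n • e n) from rfl]
  rw [(innerSL ℝ g).map_tsum hS]
  exact tsum_congr fun n => by
    simp [real_inner_smul_right, real_inner_comm g (e n)]

lemma aux_inner_tsum_single {e : ℕ → E} (hON : Orthonormal ℝ e) {b : ℕ → ℝ}
    (hS : Summable fun n => b n • e n) (m : ℕ) :
    ⟪∑' n, b n • e n, e m⟫ = b m := by
  classical
  rw [aux_inner_tsum hS]
  rw [tsum_eq_single m]
  · simp [orthonormal_iff_ite.mp hON m m, hON.1 m]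
  · intro n hn
    simp [orthonormal_iff_ite.mp hON n m, hn]

lemma aux_norm_sq {e : ℕ → E} (hON : Orthonormal ℝ e) {b : ℕ → ℝ}
    (hS : Summable fun n => b n • e n) :
    ‖∑' n, b n • e n‖ ^ 2 = ∑' n, b n ^ 2 := by
  rw [← real_inner_self_eq_norm_sq, aux_inner_tsum hS]
  exact tsum_congr fun n => by
    rw [real_inner_comm, aux_inner_tsum_single hON hS n, sq]

end Aux

set_option maxHeartbeats 1000000 in
/-- For `β > 0` and `t > 0`, the subordinated symmetric Laguerre operator
`P̃^{τ^{(β)}}_t f = ∑_n c_n(β)^t c_n(β) ⟨f, L_n^{(β)}⟩ L_n^{(β)}` is a self-adjoint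
contraction on `L²(ν_β)` and satisfies the variance decay
`Var_{ν_β}(P̃^{τ^{(β)}}_t f) ≤ (1+β)^{-2t} Var_{ν_β}(f)`. Here the `L_n^{(β)}` are the
Laguerre polynomials, `(√c_n(β) L_n^{(β)})_n` being orthonormal in `L²(ν_β)`. -/
theorem subordinated_laguerre_contraction
    (β t : ℝ) (hβ : 0 < β) (ht : 0 < t)
    (Ln : ℕ → Lp ℝ 2 (lagMeasure β))
    (hLn : ∀ n, (Ln n : ℝ → ℝ) =ᵐ[lagMeasure β] fun x => laguerrePoly β n x)
    (hON : Orthonormal ℝ fun n => Real.sqrt (lagC β n) • Ln n)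
    (T : Lp ℝ 2 (lagMeasure β) →L[ℝ] Lp ℝ 2 (lagMeasure β))
    (hT : ∀ f, T f = ∑' n, ((lagC β n ^ t) * lagC β n * ⟪f, Ln n⟫) • Ln n) :
    (∀ f g, ⟪T f, g⟫ = ⟪f, T g⟫) ∧
    (∀ f, ‖T f‖ ≤ ‖f‖) ∧
    (∀ f : Lp ℝ 2 (lagMeasure β),
      lagVar β (T f) ≤ (1 + β) ^ (-(2 * t)) * lagVar β f) := by
  classical
  set e : ℕ → Lp ℝ 2 (lagMeasure β) := fun n => Real.sqrt (lagC β n) • Ln n with he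
  have hΓβ : (0:ℝ) < Real.Gamma (β + 1) := Real.Gamma_pos_of_pos (by linarith)
  have hc_pos : ∀ n, 0 < lagC β n := by
    intro n
    have h1 : (0:ℝ) < (n:ℝ) + 1 := by positivity
    have h2 : (0:ℝ) < (n:ℝ) + β + 1 := by positivity
    exact div_pos (mul_pos (Real.Gamma_pos_of_pos h1) hΓβ) (Real.Gamma_pos_of_pos h2)
  have hc0 : lagC β 0 = 1 := by
    simp [lagC, Real.Gamma_one, div_self hΓβ.ne']
  have hrec : ∀ n : ℕ, lagC β (n + 1) = lagC β n * (((n:ℝ) + 1) / ((n:ℝ) + 1 + β)) := by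
    intro n
    have hn1 : ((n:ℝ) + 1) ≠ 0 := by positivity
    have hnβ : ((n:ℝ) + 1 + β) ≠ 0 := by positivity
    have h1 : Real.Gamma ((↑(n+1):ℝ) + 1) = ((n:ℝ) + 1) * Real.Gamma ((n:ℝ) + 1) := by
      push_cast
      rw [show (n:ℝ) + 1 + 1 = ((n:ℝ) + 1) + 1 by ring, Real.Gamma_add_one hn1]
    have h2 : Real.Gamma ((↑(n+1):ℝ) + β + 1) = ((n:ℝ) + 1 + β) * Real.Gamma ((n:ℝ) + β + 1) := by
      push_cast
      rw [show (n:ℝ) + 1 + β + 1 = ((n:ℝ) + β + 1) + 1 by ring,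
        Real.Gamma_add_one (by positivity : ((n:ℝ) + β + 1) ≠ 0)]
      ring
    have hg : Real.Gamma ((n:ℝ) + β + 1) ≠ 0 :=
      (Real.Gamma_pos_of_pos (by positivity)).ne'
    unfold lagC
    rw [h1, h2]
    field_simp
  have hanti : ∀ n : ℕ, lagC β (n + 1) ≤ lagC β n := by
    intro n
    rw [hrec n]
    refine mul_le_of_le_one_right (hc_pos n).le ?_
    rw [div_le_one (by positivity)]
    linarith
  have hle1 : ∀ n, lagC β n ≤ 1 := by
    intro n
    induction n with
    | zero => simp [hc0]
    | succ k ih => exact le_trans (hanti k) ih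
  have hleB : ∀ n : ℕ, lagC β (n + 1) ≤ (1 + β)⁻¹ := by
    intro n
    induction n with
    | zero =>
      rw [hrec 0, hc0]
      norm_num [one_div]
    | succ k ih => exact le_trans (hanti (k + 1)) ih
  -- Bessel
  have hSa : ∀ f : Lp ℝ 2 (lagMeasure β), Summable fun n => ⟪f, e n⟫ ^ 2 := by
    intro f
    have h := hON.inner_products_summable (x := f)
    refine h.congr fun n => ?_
    rw [Real.norm_eq_abs, sq_abs, real_inner_comm]
  have hBessel : ∀ f : Lp ℝ 2 (lagMeasure β), ∑' n, ⟪f, e n⟫ ^ 2 ≤ ‖f‖ ^ 2 := by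
    intro f
    have h := hON.tsum_inner_products_le f
    calc ∑' n, ⟪f, e n⟫ ^ 2 = ∑' n, ‖⟪e n, f⟫‖ ^ 2 := by
          exact tsum_congr fun n => by rw [Real.norm_eq_abs, sq_abs, real_inner_comm]
      _ ≤ ‖f‖ ^ 2 := h
  -- coefficient bound
  have hlam_nonneg : ∀ n, (0:ℝ) ≤ lagC β n ^ t := fun n => Real.rpow_nonneg (hc_pos n).le t
  have hlam_le1 : ∀ n, lagC β n ^ t ≤ 1 := fun n =>
    Real.rpow_le_one (hc_pos n).le (hle1 n) ht.le
  have hterm : ∀ (f : Lp ℝ 2 (lagMeasure β)) n,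
      (lagC β n ^ t * ⟪f, e n⟫) ^ 2 ≤ ⟪f, e n⟫ ^ 2 := by
    intro f n
    rw [mul_pow]
    refine mul_le_of_le_one_left (sq_nonneg _) ?_
    exact pow_le_one₀ (hlam_nonneg n) (hlam_le1 n)
  have hSb : ∀ f : Lp ℝ 2 (lagMeasure β),
      Summable fun n => (lagC β n ^ t * ⟪f, e n⟫) ^ 2 := by
    intro f
    exact Summable.of_nonneg_of_le (fun n => sq_nonneg _) (fun n => hterm f n) (hSa f)
  have hS : ∀ f : Lp ℝ 2 (lagMeasure β),
      Summable fun n => (lagC β n ^ t * ⟪f, e n⟫) • e n :=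
    fun f => aux_summable hON (hSb f)
  -- rewrite T
  have hTf : ∀ f, T f = ∑' n, (lagC β n ^ t * ⟪f, e n⟫) • e n := by
    intro f
    rw [hT f]
    refine tsum_congr fun n => ?_
    have hs : Real.sqrt (lagC β n) * Real.sqrt (lagC β n) = lagC β n :=
      Real.mul_self_sqrt (hc_pos n).le
    have h1 : ⟪f, e n⟫ = Real.sqrt (lagC β n) * ⟪f, Ln n⟫ := by
      simp [he, real_inner_smul_right]
    rw [h1, he, smul_smul]
    congr 1
    rw [show lagC β n ^ t * (Real.sqrt (lagC β n) * ⟪f, Ln n⟫) * Real.sqrt (lagC β n)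
        = lagC β n ^ t * ⟪f, Ln n⟫ * (Real.sqrt (lagC β n) * Real.sqrt (lagC β n)) by ring, hs]
    ring
  have inner_T : ∀ f g, ⟪T f, g⟫ = ∑' n, lagC β n ^ t * ⟪f, e n⟫ * ⟪g, e n⟫ := by
    intro f g
    rw [hTf f, aux_inner_tsum (hS f) g]
    exact tsum_congr fun n => by rw [real_inner_comm (e n) g]
  have hnorm_sq : ∀ f, ‖T f‖ ^ 2 = ∑' n, (lagC β n ^ t * ⟪f, e n⟫) ^ 2 := by
    intro f
    rw [hTf f]
    exact aux_norm_sq hON (hS f)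
  -- L² integral identities
  have hIntSq : ∀ g : Lp ℝ 2 (lagMeasure β), (∫ x, (g x) ^ 2 ∂(lagMeasure β)) = ‖g‖ ^ 2 := by
    intro g
    rw [← real_inner_self_eq_norm_sq, L2.inner_def]
    exact integral_congr_ae (Filter.Eventually.of_forall fun x => by
      simp [RCLike.inner_apply, sq])
  have hE0 : (e 0 : ℝ → ℝ) =ᵐ[lagMeasure β] fun _ => (1:ℝ) := by
    have h1 : e 0 = Ln 0 := by rw [he]; simp [hc0]
    rw [h1]
    filter_upwards [hLn 0] with x hx
    rw [hx]
    simp [laguerrePoly, Finset.sum_range_one, div_self hΓβ.ne']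
  have hInt1 : ∀ g : Lp ℝ 2 (lagMeasure β), (∫ x, g x ∂(lagMeasure β)) = ⟪g, e 0⟫ := by
    intro g
    rw [L2.inner_def]
    refine integral_congr_ae ?_
    filter_upwards [hE0] with x hx
    simp [RCLike.inner_apply, hx]
  have hVar : ∀ g : Lp ℝ 2 (lagMeasure β), lagVar β g = ‖g‖ ^ 2 - ⟪g, e 0⟫ ^ 2 := by
    intro g
    unfold lagVar
    rw [hIntSq g, hInt1 g]
  refine ⟨?_, ?_, ?_⟩
  · -- self-adjoint
    intro f g
    rw [inner_T f g, real_inner_comm (T g) f, inner_T g f]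
    exact tsum_congr fun n => by ring
  · -- contraction
    intro f
    have h1 : ‖T f‖ ^ 2 ≤ ‖f‖ ^ 2 := by
      rw [hnorm_sq f]
      exact le_trans (Summable.tsum_le_tsum (hterm f) (hSb f) (hSa f)) (hBessel f)
    have h2 := Real.sqrt_le_sqrt h1
    rwa [Real.sqrt_sq (norm_nonneg _), Real.sqrt_sq (norm_nonneg _)] at h2
  · -- variance decay
    intro f
    set K : ℝ := (1 + β) ^ (-(2 * t)) with hKdef
    have h1β : (0:ℝ) < 1 + β := by linarith
    have hKnonneg : 0 ≤ K := Real.rpow_nonneg h1β.le _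
    have hKsq : ((1 + β) ^ (-t)) ^ 2 = K := by
      rw [sq, ← Real.rpow_add h1β]
      congr 1
      ring
    have hlamle : ∀ n : ℕ, lagC β (n + 1) ^ t ≤ (1 + β) ^ (-t) := by
      intro n
      calc lagC β (n + 1) ^ t ≤ ((1 + β)⁻¹) ^ t :=
            Real.rpow_le_rpow (hc_pos _).le (hleB n) ht.le
        _ = (1 + β) ^ (-t) := by rw [Real.inv_rpow h1β.le, ← Real.rpow_neg h1β.le]
    have hterm2 : ∀ n : ℕ,
        (lagC β (n + 1) ^ t * ⟪f, e (n + 1)⟫) ^ 2 ≤ K * ⟪f, e (n + 1)⟫ ^ 2 := by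
      intro n
      rw [mul_pow]
      refine mul_le_mul_of_nonneg_right ?_ (sq_nonneg _)
      calc (lagC β (n + 1) ^ t) ^ 2 ≤ ((1 + β) ^ (-t)) ^ 2 :=
            pow_le_pow_left₀ (hlam_nonneg _) (hlamle n) 2
        _ = K := hKsq
    have hb := hSb f
    have hsplit_b : (∑' n, (lagC β n ^ t * ⟪f, e n⟫) ^ 2)
        = (lagC β 0 ^ t * ⟪f, e 0⟫) ^ 2 + ∑' n, (lagC β (n+1) ^ t * ⟪f, e (n+1)⟫) ^ 2 :=
      Summable.tsum_eq_zero_add hb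
    have hb0 : lagC β 0 ^ t * ⟪f, e 0⟫ = ⟪f, e 0⟫ := by
      rw [hc0, Real.one_rpow, one_mul]
    have hTf0 : ⟪T f, e 0⟫ = ⟪f, e 0⟫ := by
      rw [hTf f, aux_inner_tsum_single hON (hS f) 0, hb0]
    have hVarTf : lagVar β (T f) = ∑' n, (lagC β (n+1) ^ t * ⟪f, e (n+1)⟫) ^ 2 := by
      rw [hVar (T f), hnorm_sq f, hTf0, hsplit_b, hb0]
      ring
    have hsplit_a : (∑' n, ⟪f, e n⟫ ^ 2)
        = ⟪f, e 0⟫ ^ 2 + ∑' n, ⟪f, e (n+1)⟫ ^ 2 := Summable.tsum_eq_zero_add (hSa f)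
    have hVarf : ∑' n, ⟪f, e (n+1)⟫ ^ 2 ≤ lagVar β f := by
      rw [hVar f]
      have h := hBessel f
      rw [hsplit_a] at h
      linarith
    calc lagVar β (T f) = ∑' n, (lagC β (n+1) ^ t * ⟪f, e (n+1)⟫) ^ 2 := hVarTf
      _ ≤ ∑' n, K * ⟪f, e (n+1)⟫ ^ 2 :=
          Summable.tsum_le_tsum hterm2 ((summable_nat_add_iff 1).mpr hb)
            (((summable_nat_add_iff 1).mpr (hSa f)).mul_left K)
      _ = K * ∑' n, ⟪f, e (n+1)⟫ ^ 2 := tsum_mul_left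
      _ ≤ K * lagVar β f := mul_le_mul_of_nonneg_left hVarf hKnonneg
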